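/- Let A be an abelian category that is Frobenius, i.e., A has enough projective objects and enough injective objects and the class of projective objects coincides with the class of injective objects. Then the morphism category Mor(A) has enough projectives and enough injectives; an object α: X → Y of Mor(A) is projective if and only if it is isomorphic in Mor(A) to a direct sum (0 → P) ⊕ (Q →(id_Q) Q) with P, Q projective objects of A, and α is injective if and only if it is isomorphic to (P → 0) ⊕ (Q →(id_Q) Q) with P, Q projective (= injective) objects of A. -/

import Mathlib

universe v u

open CategoryTheory Limits ZeroObject

set_option linter.unusedSectionVars false
set_option maxHeartbeats 1000000

section Aux

variable {A : Type u} [Category.{v} A] [Abelian A]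

lemma arrow_epi_of_components {f g : Arrow A} (φ : f ⟶ g)
    (h1 : Epi φ.left) (h2 : Epi φ.right) : Epi φ := by
  constructor
  intro Z u v h
  apply CommaMorphism.ext
  · exact (cancel_epi φ.left).1 (congrArg CommaMorphism.left h)
  · exact (cancel_epi φ.right).1 (congrArg CommaMorphism.right h)

lemma arrow_mono_of_components {f g : Arrow A} (φ : f ⟶ g)
    (h1 : Mono φ.left) (h2 : Mono φ.right) : Mono φ := by
  constructor
  intro Z u v h
  apply CommaMorphism.ext
  · exact (cancel_mono φ.left).1 (congrArg CommaMorphism.left h)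
  · exact (cancel_mono φ.right).1 (congrArg CommaMorphism.right h)

lemma arrow_epi_left {f g : Arrow A} (φ : f ⟶ g) [Epi φ] : Epi φ.left := by
  constructor
  intro Z u v h
  let hu : g ⟶ Arrow.mk (0 : Z ⟶ (0 : A)) := Arrow.homMk (u := u) (v := 0) (by simp)
  let hv : g ⟶ Arrow.mk (0 : Z ⟶ (0 : A)) := Arrow.homMk (u := v) (v := 0) (by simp)
  have heq : φ ≫ hu = φ ≫ hv := by
    apply CommaMorphism.ext
    · show φ.left ≫ u = φ.left ≫ v
      exact h
    · rfl
  exact congrArg CommaMorphism.left ((cancel_epi φ).1 heq)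

lemma arrow_epi_right {f g : Arrow A} (φ : f ⟶ g) [Epi φ] : Epi φ.right := by
  constructor
  intro Z u v h
  let hu : g ⟶ Arrow.mk (𝟙 Z) := Arrow.homMk (u := g.hom ≫ u) (v := u) (by simp)
  let hv : g ⟶ Arrow.mk (𝟙 Z) := Arrow.homMk (u := g.hom ≫ v) (v := v) (by simp)
  have heq : φ ≫ hu = φ ≫ hv := by
    apply CommaMorphism.ext
    · show φ.left ≫ (g.hom ≫ u) = φ.left ≫ (g.hom ≫ v)
      rw [← Category.assoc, ← Category.assoc, Arrow.w φ, Category.assoc, Category.assoc, h]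
    · exact h
  exact congrArg CommaMorphism.right ((cancel_epi φ).1 heq)

lemma arrow_mono_left {f g : Arrow A} (φ : f ⟶ g) [Mono φ] : Mono φ.left := by
  constructor
  intro Z u v h
  let hu : Arrow.mk (𝟙 Z) ⟶ f := Arrow.homMk (u := u) (v := u ≫ f.hom) (by simp)
  let hv : Arrow.mk (𝟙 Z) ⟶ f := Arrow.homMk (u := v) (v := v ≫ f.hom) (by simp)
  have heq : hu ≫ φ = hv ≫ φ := by
    apply CommaMorphism.ext
    · exact h
    · show (u ≫ f.hom) ≫ φ.right = (v ≫ f.hom) ≫ φ.right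
      rw [Category.assoc, Category.assoc, ← Arrow.w φ, ← Category.assoc, ← Category.assoc, h]
  exact congrArg CommaMorphism.left ((cancel_mono φ).1 heq)

lemma arrow_mono_right {f g : Arrow A} (φ : f ⟶ g) [Mono φ] : Mono φ.right := by
  constructor
  intro Z u v h
  let hu : Arrow.mk (0 : (0 : A) ⟶ Z) ⟶ f := Arrow.homMk (u := 0) (v := u) (by simp)
  let hv : Arrow.mk (0 : (0 : A) ⟶ Z) ⟶ f := Arrow.homMk (u := 0) (v := v) (by simp)
  have heq : hu ≫ φ = hv ≫ φ := by
    apply CommaMorphism.ext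
    · rfl
    · exact h
  exact congrArg CommaMorphism.right ((cancel_mono φ).1 heq)

/-- `(0 → P) ⊕ (Q = Q)` is projective in the arrow category. -/
lemma arrow_projective_inr (P Q : A) [Projective P] [Projective Q] :
    Projective (Arrow.mk (biprod.inr : Q ⟶ P ⊞ Q)) := by
  constructor
  intro E X f e he
  haveI hel : Epi e.left := arrow_epi_left e
  haveI her : Epi e.right := arrow_epi_right e
  obtain ⟨l0, hl0⟩ := Projective.factors (P := Q) f.left e.left
  obtain ⟨lP, hlP⟩ := Projective.factors (P := P) (biprod.inl ≫ f.right) e.right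
  refine ⟨Arrow.homMk (u := l0) (v := biprod.desc lP (l0 ≫ E.hom)) (by simp), ?_⟩
  apply CommaMorphism.ext
  · show l0 ≫ e.left = f.left
    exact hl0
  · show biprod.desc lP (l0 ≫ E.hom) ≫ e.right = f.right
    apply biprod.hom_ext'
    · rw [← Category.assoc, biprod.inl_desc, hlP]
    · rw [← Category.assoc, biprod.inr_desc, Category.assoc, ← Arrow.w e,
        ← Category.assoc, hl0]
      exact Arrow.w f

/-- `(P → 0) ⊕ (Q = Q)` is injective in the arrow category. -/
lemma arrow_injective_snd (P Q : A) [Injective P] [Injective Q] :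
    Injective (Arrow.mk (biprod.snd : P ⊞ Q ⟶ Q)) := by
  constructor
  intro X Y g f hf
  haveI hfl : Mono f.left := arrow_mono_left f
  haveI hfr : Mono f.right := arrow_mono_right f
  obtain ⟨h1, hh1⟩ := Injective.factors (J := Q) g.right f.right
  obtain ⟨hP, hhP⟩ := Injective.factors (J := P) (g.left ≫ biprod.fst) f.left
  refine ⟨Arrow.homMk (u := biprod.lift hP (Y.hom ≫ h1)) (v := h1) (by simp), ?_⟩
  apply CommaMorphism.ext
  · show f.left ≫ biprod.lift hP (Y.hom ≫ h1) = g.left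
    apply biprod.hom_ext
    · rw [Category.assoc, biprod.lift_fst, hhP]
    · rw [Category.assoc, biprod.lift_snd, ← Category.assoc, Arrow.w f,
        Category.assoc, hh1]
      exact (Arrow.w g).symm
  · show f.right ≫ h1 = g.right
    exact hh1

lemma projective_of_retract' {X Y : A} (p : X ⟶ Y) (s : Y ⟶ X) (h : s ≫ p = 𝟙 Y)
    (hX : Projective X) : Projective Y := by
  constructor
  intro E Z f e he
  obtain ⟨g, hg⟩ := hX.factors (p ≫ f) e
  exact ⟨s ≫ g, by rw [Category.assoc, hg, ← Category.assoc, h, Category.id_comp]⟩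

lemma injective_of_retract' {X Y : A} (p : X ⟶ Y) (s : Y ⟶ X) (h : s ≫ p = 𝟙 Y)
    (hX : Injective X) : Injective Y := by
  constructor
  intro Z W g f hf
  obtain ⟨g', hg'⟩ := hX.factors (g ≫ s) f
  exact ⟨g' ≫ p, by rw [← Category.assoc, hg', Category.assoc, h, Category.comp_id]⟩


lemma retraction_iso_inr {X Y : A} (a : X ⟶ Y) (r : Y ⟶ X) (hret : a ≫ r = 𝟙 X) :
    ∃ d : cokernel a ⟶ Y, d ≫ cokernel.π a = 𝟙 (cokernel a) ∧
      Nonempty (Arrow.mk a ≅ Arrow.mk (biprod.inr : X ⟶ cokernel a ⊞ X)) := by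
  have hd0 : a ≫ (𝟙 Y - r ≫ a) = 0 := by
    rw [Preadditive.comp_sub, Category.comp_id, ← Category.assoc, hret, Category.id_comp, sub_self]
  set d : cokernel a ⟶ Y := cokernel.desc a (𝟙 Y - r ≫ a) hd0 with hddef
  have hdπ : d ≫ cokernel.π a = 𝟙 (cokernel a) := by
    rw [← cancel_epi (cokernel.π a), ← Category.assoc, hddef, cokernel.π_desc]
    simp [Preadditive.sub_comp, Category.assoc]
  have hdr : d ≫ r = 0 := by
    rw [← cancel_epi (cokernel.π a), ← Category.assoc, hddef, cokernel.π_desc]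
    simp [Preadditive.sub_comp, Category.assoc, hret]
  refine ⟨d, hdπ, ⟨?_⟩⟩
  let φ : Y ≅ cokernel a ⊞ X :=
    { hom := biprod.lift (cokernel.π a) r
      inv := biprod.desc d a
      hom_inv_id := by
        rw [biprod.lift_desc, hddef, cokernel.π_desc, sub_add_cancel]
      inv_hom_id := by
        apply biprod.hom_ext'
        · rw [← Category.assoc, biprod.inl_desc, Category.comp_id]
          apply biprod.hom_ext
          · rw [Category.assoc, biprod.lift_fst, hdπ, biprod.inl_fst]
          · rw [Category.assoc, biprod.lift_snd, hdr, biprod.inl_snd]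
        · rw [← Category.assoc, biprod.inr_desc, Category.comp_id]
          apply biprod.hom_ext
          · rw [Category.assoc, biprod.lift_fst, cokernel.condition, biprod.inr_fst]
          · rw [Category.assoc, biprod.lift_snd, hret, biprod.inr_snd] }
  refine Arrow.isoMk (Iso.refl X) φ ?_
  show 𝟙 X ≫ biprod.inr = a ≫ biprod.lift (cokernel.π a) r
  rw [Category.id_comp]
  apply biprod.hom_ext
  · rw [Category.assoc, biprod.lift_fst, cokernel.condition, biprod.inr_fst]
  · rw [Category.assoc, biprod.lift_snd, hret, biprod.inr_snd]

lemma section_iso_snd {X Y : A} (a : X ⟶ Y) (s : Y ⟶ X) (hsec : s ≫ a = 𝟙 Y) :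
    ∃ k : X ⟶ kernel a, kernel.ι a ≫ k = 𝟙 (kernel a) ∧
      Nonempty (Arrow.mk a ≅ Arrow.mk (biprod.snd : kernel a ⊞ Y ⟶ Y)) := by
  have hk0 : (𝟙 X - a ≫ s) ≫ a = 0 := by
    rw [Preadditive.sub_comp, Category.id_comp, Category.assoc, hsec, Category.comp_id, sub_self]
  set k : X ⟶ kernel a := kernel.lift a (𝟙 X - a ≫ s) hk0 with hkdef
  have hιk : kernel.ι a ≫ k = 𝟙 (kernel a) := by
    rw [← cancel_mono (kernel.ι a), Category.assoc, hkdef, kernel.lift_ι]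
    simp [Preadditive.comp_sub, ← Category.assoc]
  have hsk : s ≫ k = 0 := by
    rw [← cancel_mono (kernel.ι a), Category.assoc, hkdef, kernel.lift_ι]
    simp [Preadditive.comp_sub, ← Category.assoc, hsec]
  refine ⟨k, hιk, ⟨?_⟩⟩
  let φ : X ≅ kernel a ⊞ Y :=
    { hom := biprod.lift k a
      inv := biprod.desc (kernel.ι a) s
      hom_inv_id := by
        rw [biprod.lift_desc, hkdef, kernel.lift_ι, sub_add_cancel]
      inv_hom_id := by
        apply biprod.hom_ext'
        · rw [← Category.assoc, biprod.inl_desc]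
          apply biprod.hom_ext
          · rw [Category.assoc, biprod.lift_fst, hιk, Category.comp_id, biprod.inl_fst]
          · rw [Category.assoc, biprod.lift_snd, kernel.condition, Category.comp_id,
              biprod.inl_snd]
        · rw [← Category.assoc, biprod.inr_desc]
          apply biprod.hom_ext
          · rw [Category.assoc, biprod.lift_fst, hsk, Category.comp_id, biprod.inr_fst]
          · rw [Category.assoc, biprod.lift_snd, hsec, Category.comp_id, biprod.inr_snd] }
  refine Arrow.isoMk φ (Iso.refl Y) ?_
  show biprod.lift k a ≫ biprod.snd = a ≫ 𝟙 Y
  rw [biprod.lift_snd, Category.comp_id]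

end Aux

/-- **Observation (Section 5, cf. [RS06, Section 2]).** Let `A` be a Frobenius abelian
category (enough projectives, enough injectives, and projectives = injectives).  Then
the morphism category `Mor(A)` has enough projectives and enough injectives; its
projective objects are exactly those isomorphic to `(0 → P) ⊕ (Q →id Q)` with `P, Q`
projective, and its injective objects are exactly those isomorphic to
`(P → 0) ⊕ (Q →id Q)` with `P, Q` projective (= injective). -/
theorem morphism_category_projectives_injectives
    {A : Type u} [Category.{v} A] [Abelian A]
    [EnoughProjectives A] [EnoughInjectives A]
    (hPI : ∀ X : A, Projective X ↔ Injective X) :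
    EnoughProjectives (Arrow A) ∧ EnoughInjectives (Arrow A) ∧
    (∀ α : Arrow A, Projective α ↔ ∃ P Q : A, Projective P ∧ Projective Q ∧
      Nonempty (α ≅ Arrow.mk (biprod.inr : Q ⟶ P ⊞ Q))) ∧
    (∀ α : Arrow A, Injective α ↔ ∃ P Q : A, Projective P ∧ Projective Q ∧
      Nonempty (α ≅ Arrow.mk (biprod.snd : P ⊞ Q ⟶ Q))) := by
  -- components of projective/injective arrows are projective/injective
  have proj_left : ∀ α : Arrow A, Projective α → Projective α.left := by
    intro α hα
    constructor
    intro E Z f e he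
    let F : α ⟶ Arrow.mk (0 : Z ⟶ (0 : A)) := Arrow.homMk (u := f) (v := 0) (by simp)
    let Ee : Arrow.mk (0 : E ⟶ (0 : A)) ⟶ Arrow.mk (0 : Z ⟶ (0 : A)) :=
      Arrow.homMk (u := e) (v := 0) (by simp)
    haveI h2 : Epi ((0 : (0:A) ⟶ (0:A))) := by
      have : IsIso (0 : (0:A) ⟶ (0:A)) := by
        refine ⟨0, ?_, ?_⟩ <;> apply (isZero_zero A).eq_of_src
      infer_instance
    haveI : Epi Ee := arrow_epi_of_components Ee he h2
    obtain ⟨l, hl⟩ := hα.factors F Ee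
    exact ⟨l.left, congrArg CommaMorphism.left hl⟩
  have proj_right : ∀ α : Arrow A, Projective α → Projective α.right := by
    intro α hα
    constructor
    intro E Z f e he
    let F : α ⟶ Arrow.mk (𝟙 Z) := Arrow.homMk (u := α.hom ≫ f) (v := f) (by simp)
    let Ee : Arrow.mk (𝟙 E) ⟶ Arrow.mk (𝟙 Z) := Arrow.homMk (u := e) (v := e) (by simp)
    haveI : Epi Ee := arrow_epi_of_components Ee he he
    obtain ⟨l, hl⟩ := hα.factors F Ee
    exact ⟨l.right, congrArg CommaMorphism.right hl⟩
  have inj_left : ∀ α : Arrow A, Injective α → Injective α.left := by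
    intro α hα
    constructor
    intro Z W g f hf
    let G : Arrow.mk (𝟙 Z) ⟶ α := Arrow.homMk (u := g) (v := g ≫ α.hom) (by simp)
    let Ff : Arrow.mk (𝟙 Z) ⟶ Arrow.mk (𝟙 W) := Arrow.homMk (u := f) (v := f) (by simp)
    haveI : Mono Ff := arrow_mono_of_components Ff hf hf
    obtain ⟨h, hh⟩ := hα.factors G Ff
    exact ⟨h.left, congrArg CommaMorphism.left hh⟩
  have inj_right : ∀ α : Arrow A, Injective α → Injective α.right := by
    intro α hα
    constructor
    intro Z W g f hf
    let G : Arrow.mk (0 : (0 : A) ⟶ Z) ⟶ α := Arrow.homMk (u := 0) (v := g) (by simp)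
    let Ff : Arrow.mk (0 : (0 : A) ⟶ Z) ⟶ Arrow.mk (0 : (0 : A) ⟶ W) :=
      Arrow.homMk (u := 0) (v := f) (by simp)
    haveI h2 : Mono ((0 : (0:A) ⟶ (0:A))) := by
      have : IsIso (0 : (0:A) ⟶ (0:A)) := by
        refine ⟨0, ?_, ?_⟩ <;> apply (isZero_zero A).eq_of_src
      infer_instance
    haveI : Mono Ff := arrow_mono_of_components Ff h2 hf
    obtain ⟨h, hh⟩ := hα.factors G Ff
    exact ⟨h.right, congrArg CommaMorphism.right hh⟩
  refine ⟨?_, ?_, ?_, ?_⟩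
  · -- enough projectives
    constructor
    intro α
    let P := Projective.over α.left
    let R := Projective.over α.right
    let π : Arrow.mk (biprod.inr : P ⟶ R ⊞ P) ⟶ α :=
      Arrow.homMk (u := Projective.π α.left)
        (v := biprod.desc (Projective.π α.right) (Projective.π α.left ≫ α.hom)) (by simp)
    haveI h1 : Epi π.left := by
      show Epi (Projective.π α.left); infer_instance
    haveI h2 : Epi π.right := by
      have : biprod.inl ≫ π.right = Projective.π α.right := by
        show biprod.inl ≫ biprod.desc _ _ = _; simp
      exact epi_of_epi_fac this
    haveI := arrow_projective_inr R P
    haveI := arrow_epi_of_components π h1 h2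
    exact ⟨⟨_, π⟩⟩
  · -- enough injectives
    constructor
    intro α
    let I := Injective.under α.left
    let J := Injective.under α.right
    let ι : α ⟶ Arrow.mk (biprod.snd : I ⊞ J ⟶ J) :=
      Arrow.homMk (u := biprod.lift (Injective.ι α.left) (α.hom ≫ Injective.ι α.right))
        (v := Injective.ι α.right) (by simp)
    haveI h1 : Mono ι.left := by
      have : ι.left ≫ biprod.fst = Injective.ι α.left := by
        show biprod.lift _ _ ≫ biprod.fst = _; simp
      exact mono_of_mono_fac this
    haveI h2 : Mono ι.right := by
      show Mono (Injective.ι α.right); infer_instance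
    exact ⟨⟨_, arrow_injective_snd I J, ι, arrow_mono_of_components ι h1 h2⟩⟩
  · -- projective characterization
    intro α
    constructor
    · intro hα
      let π : Arrow.mk (biprod.inr : α.left ⟶ α.right ⊞ α.left) ⟶ α :=
        Arrow.homMk (u := 𝟙 α.left) (v := biprod.desc (𝟙 α.right) α.hom) (by simp)
      haveI h1 : Epi π.left := by
        show Epi (𝟙 α.left); infer_instance
      haveI h2 : Epi π.right := by
        have : biprod.inl ≫ π.right = 𝟙 α.right := by
          show biprod.inl ≫ biprod.desc _ _ = _; simp
        exact epi_of_epi_fac this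
      haveI hπ : Epi π := arrow_epi_of_components π h1 h2
      obtain ⟨s, hs⟩ := hα.factors (𝟙 α) π
      have hsl : s.left = 𝟙 α.left := by
        have h' : s.left ≫ 𝟙 α.left = 𝟙 α.left := congrArg CommaMorphism.left hs
        simpa using h'
      have hw : α.hom ≫ s.right = biprod.inr := by
        have h' := Arrow.w s
        simp only [Arrow.mk_hom, hsl, Category.id_comp] at h'
        exact h'.symm
      have hret : α.hom ≫ (s.right ≫ biprod.snd) = 𝟙 α.left := by
        rw [← Category.assoc, hw]; exact biprod.inr_snd
      have hl : Projective α.left := proj_left α hα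
      have hrproj : Projective α.right := proj_right α hα
      obtain ⟨d, hdπ, ⟨iso⟩⟩ := retraction_iso_inr α.hom (s.right ≫ biprod.snd) hret
      exact ⟨cokernel α.hom, α.left,
        projective_of_retract' (cokernel.π α.hom) d hdπ hrproj, hl,
        ⟨eqToIso (Arrow.mk_eq α).symm ≪≫ iso⟩⟩
    · rintro ⟨P, Q, hP, hQ, ⟨e⟩⟩
      haveI := hP; haveI := hQ
      exact Projective.of_iso e.symm (arrow_projective_inr P Q)
  · -- injective characterization
    intro α
    constructor
    · intro hα
      let ι : α ⟶ Arrow.mk (biprod.snd : α.left ⊞ α.right ⟶ α.right) :=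
        Arrow.homMk (u := biprod.lift (𝟙 α.left) α.hom) (v := 𝟙 α.right) (by simp)
      haveI h1 : Mono ι.left := by
        have : ι.left ≫ biprod.fst = 𝟙 α.left := by
          show biprod.lift _ _ ≫ biprod.fst = _; simp
        exact mono_of_mono_fac this
      haveI h2 : Mono ι.right := by
        show Mono (𝟙 α.right); infer_instance
      haveI hι : Mono ι := arrow_mono_of_components ι h1 h2
      obtain ⟨h, hh⟩ := hα.factors (𝟙 α) ι
      have hhr : h.right = 𝟙 α.right := by
        have h' : 𝟙 α.right ≫ h.right = 𝟙 α.right := congrArg CommaMorphism.right hh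
        simpa using h'
      have hw : h.left ≫ α.hom = biprod.snd := by
        have h' := Arrow.w h
        rw [hhr] at h'
        simpa using h'
      have hsec : (biprod.inr ≫ h.left) ≫ α.hom = 𝟙 α.right := by
        rw [Category.assoc, hw]; exact biprod.inr_snd
      have hlinj : Injective α.left := inj_left α hα
      have hrinj : Injective α.right := inj_right α hα
      obtain ⟨k, hιk, ⟨iso⟩⟩ := section_iso_snd α.hom (biprod.inr ≫ h.left) hsec
      exact ⟨kernel α.hom, α.right,
        (hPI _).2 (injective_of_retract' k (kernel.ι α.hom) hιk hlinj),
        (hPI _).2 hrinj,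
        ⟨eqToIso (Arrow.mk_eq α).symm ≪≫ iso⟩⟩
    · rintro ⟨P, Q, hP, hQ, ⟨e⟩⟩
      haveI : Injective P := (hPI P).1 hP
      haveI : Injective Q := (hPI Q).1 hQ
      exact Injective.of_iso e.symm (arrow_injective_snd P Q)
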